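/- Let w₁, w₂, w₃ be positive reals satisfying √(9 w₁ w₂ w₃) = w₁ + w₂ + w₃, and suppose w₂ = n₂² and w₃ = n₃² for positive integers n₂, n₃, and w₁ is a positive integer. Then w₁ is a perfect square, say w₁ = n₁², and (n₁, n₂, n₃) satisfies the Markov equation n₁² + n₂² + n₃² = 3 n₁ n₂ n₃. -/
import Mathlib


/-- If positive reals `w₁, w₂, w₃` satisfy `√(9 w₁ w₂ w₃) = w₁ + w₂ + w₃`,
with `w₂ = n₂²`, `w₃ = n₃²` for positive integers `n₂, n₃`, and `w₁` is a
positive integer, then `w₁` is a perfect square `n₁²` and `(n₁, n₂, n₃)` is a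
Markov triple. -/
theorem weight_is_square_markov (w₁ w₂ w₃ : ℝ) (h₁ : 0 < w₁) (h₂ : 0 < w₂) (h₃ : 0 < w₃)
    (hrel : Real.sqrt (9 * w₁ * w₂ * w₃) = w₁ + w₂ + w₃)
    (n₂ n₃ : ℕ) (hn₂ : 0 < n₂) (hn₃ : 0 < n₃)
    (hw₂ : w₂ = (n₂ : ℝ) ^ 2) (hw₃ : w₃ = (n₃ : ℝ) ^ 2)
    (hint : ∃ m : ℕ, 0 < m ∧ w₁ = (m : ℝ)) :
    ∃ n₁ : ℕ, 0 < n₁ ∧ w₁ = (n₁ : ℝ) ^ 2 ∧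
      n₁ ^ 2 + n₂ ^ 2 + n₃ ^ 2 = 3 * n₁ * n₂ * n₃ := by
  obtain ⟨m, hm, hw₁⟩ := hint
  have hsq : 9 * w₁ * w₂ * w₃ = (w₁ + w₂ + w₃) ^ 2 := by
    rw [← hrel, Real.sq_sqrt (by positivity)]
  subst hw₁ hw₂ hw₃
  have hnat : 9 * m * n₂ ^ 2 * n₃ ^ 2 = (m + n₂ ^ 2 + n₃ ^ 2) ^ 2 := by
    exact_mod_cast hsq
  have h2 : (3 * n₂ * n₃) ^ 2 ∣ (m + n₂ ^ 2 + n₃ ^ 2) ^ 2 := ⟨m, by ring_nf; ring_nf at hnat; linarith⟩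
  have hd : 3 * n₂ * n₃ ∣ m + n₂ ^ 2 + n₃ ^ 2 :=
    (Nat.pow_dvd_pow_iff (by norm_num)).mp h2
  obtain ⟨n₁, hk⟩ := hd
  have hmeq : m = n₁ ^ 2 := by
    have h9 : 0 < 9 * n₂ ^ 2 * n₃ ^ 2 := by positivity
    apply Nat.eq_of_mul_eq_mul_left h9
    rw [hk] at hnat
    ring_nf at hnat ⊢
    linarith
  have hn₁ : 0 < n₁ := Nat.pos_of_ne_zero fun h => by simp [h] at hmeq; omega
  refine ⟨n₁, hn₁, by exact_mod_cast congrArg (Nat.cast : ℕ → ℝ) hmeq, ?_⟩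
  rw [hmeq] at hk
  linarith [hk, mul_comm n₂ n₁]
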